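/- arXiv:2312.13712 — 5 statements merged into one kernel-verified Lean document; each statement's English description precedes it below -/
import Mathlib

section
/- Let X be a type, and model a dataset as a multiset of records from X; two datasets are neighbors if one is obtained from the other by replacing at most one record (i.e., D₂ = (D₁ − {a}) + {b} for some a ∈ D₁ and b ∈ X, or D₂ = D₁). Let κ₁ be a mechanism assigning to each dataset a probability measure on a measurable space Ω₁ that satisfies ε₁-differential privacy, and let κ₂ be a mechanism into probability measures on Ω₂ that satisfies ε₂-differential privacy. Then for every measurable function g : Ω₁ × Ω₂ → Ω₃, the mechanism D ↦ (κ₁(D) ⊗ κ₂(D)).map g (the pushforward under g of the product measure of κ₁(D) and κ₂(D)) satisfies (ε₁ + ε₂)-differential privacy. -/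
open MeasureTheory Real

/-- Two datasets (multisets of records) are neighbors if one is obtained from the
other by replacing at most one record. -/
def Neighbor {X : Type*} [DecidableEq X] (D₁ D₂ : Multiset X) : Prop :=
  D₂ = D₁ ∨ ∃ a ∈ D₁, ∃ b : X, D₂ = D₁.erase a + {b}

/-- A mechanism `κ` satisfies `ε`-differential privacy. -/
def DP {X Ω : Type*} [DecidableEq X] [MeasurableSpace Ω] (ε : ℝ)
    (κ : Multiset X → ProbabilityMeasure Ω) : Prop :=
  ∀ D₁ D₂ : Multiset X, Neighbor D₁ D₂ → ∀ S : Set Ω, MeasurableSet S →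
    (κ D₁).toMeasure S ≤ ENNReal.ofReal (Real.exp ε) * (κ D₂).toMeasure S

/-- Sequential composition: combining an `ε₁`-DP mechanism and an `ε₂`-DP mechanism
through any measurable function `g` yields an `(ε₁ + ε₂)`-DP mechanism. -/
theorem sequential_composition {X Ω₁ Ω₂ Ω₃ : Type*} [DecidableEq X]
    [MeasurableSpace Ω₁] [MeasurableSpace Ω₂] [MeasurableSpace Ω₃]
    (ε₁ ε₂ : ℝ)
    (κ₁ : Multiset X → ProbabilityMeasure Ω₁)
    (κ₂ : Multiset X → ProbabilityMeasure Ω₂)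
    (h₁ : DP ε₁ κ₁) (h₂ : DP ε₂ κ₂)
    (g : Ω₁ × Ω₂ → Ω₃) (hg : Measurable g) :
    ∀ D₁ D₂ : Multiset X, Neighbor D₁ D₂ → ∀ S : Set Ω₃, MeasurableSet S →
      (((κ₁ D₁).toMeasure.prod (κ₂ D₁).toMeasure).map g) S ≤
        ENNReal.ofReal (Real.exp (ε₁ + ε₂)) *
          (((κ₁ D₂).toMeasure.prod (κ₂ D₂).toMeasure).map g) S := by
  intro D₁ D₂ hN S hS
  have hT : MeasurableSet (g ⁻¹' S) := hg hS
  rw [Measure.map_apply hg hS, Measure.map_apply hg hS,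
    Measure.prod_apply hT, Measure.prod_apply hT]
  calc ∫⁻ x, (κ₂ D₁).toMeasure (Prod.mk x ⁻¹' (g ⁻¹' S)) ∂(κ₁ D₁).toMeasure
      ≤ ∫⁻ x, ENNReal.ofReal (Real.exp ε₂) *
          (κ₂ D₂).toMeasure (Prod.mk x ⁻¹' (g ⁻¹' S)) ∂(κ₁ D₁).toMeasure := by
        refine lintegral_mono fun x => ?_
        exact h₂ D₁ D₂ hN _ (measurable_prodMk_left hT)
    _ = ENNReal.ofReal (Real.exp ε₂) *
          ∫⁻ x, (κ₂ D₂).toMeasure (Prod.mk x ⁻¹' (g ⁻¹' S)) ∂(κ₁ D₁).toMeasure := by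
        rw [lintegral_const_mul]
        exact (measurable_measure_prodMk_left hT).comp measurable_id
    _ ≤ ENNReal.ofReal (Real.exp ε₂) *
          ∫⁻ x, (κ₂ D₂).toMeasure (Prod.mk x ⁻¹' (g ⁻¹' S))
            ∂(ENNReal.ofReal (Real.exp ε₁) • (κ₁ D₂).toMeasure) := by
        refine mul_le_mul_right (lintegral_mono' ?_ le_rfl) _
        refine Measure.le_iff.2 fun s hs => ?_
        rw [Measure.smul_apply, smul_eq_mul]
        exact h₁ D₁ D₂ hN s hs
    _ = ENNReal.ofReal (Real.exp (ε₁ + ε₂)) *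
          ∫⁻ x, (κ₂ D₂).toMeasure (Prod.mk x ⁻¹' (g ⁻¹' S)) ∂(κ₁ D₂).toMeasure := by
        rw [lintegral_smul_measure, smul_eq_mul, ← mul_assoc, ← ENNReal.ofReal_mul (exp_nonneg _),
          ← Real.exp_add, add_comm ε₂ ε₁]
end

section
/- Let mA ≤ MA be real numbers and let C be a nonempty multiset of real numbers all of whose elements lie in the interval [mA, MA]. Define the centroid c(M) of a nonempty multiset M of reals as (Σ M)/|M|. Then the set { |c((C − {a}) + {v}) − c(C)| : a ∈ C, v ∈ [mA, MA] } of centroid changes over all single-record replacements within the domain [mA, MA] has greatest element max(MA − min C, max C − mA) / |C|; that is, this value is both attained by some replacement and an upper bound for all replacements. -/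
/-- The centroid (arithmetic mean) of a multiset of reals. -/
noncomputable def centroid (M : Multiset ℝ) : ℝ := M.sum / M.card

/-- The `i`-th smallest element of a multiset of reals (0-indexed). -/
noncomputable def nthSmallest (M : Multiset ℝ) (i : ℕ) : ℝ :=
  (M.sort (· ≤ ·)).getD i 0

lemma centroid_replace (C : Multiset ℝ) (a : ℝ) (ha : a ∈ C) (v : ℝ) :
    centroid (C.erase a + {v}) - centroid C = (v - a) / C.card := by
  have hpos : 0 < C.card := Multiset.card_pos.2 (fun h => by simp [h] at ha)
  have hsum : (C.erase a).sum = C.sum - a := by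
    have h1 : C.sum = a + (C.erase a).sum := by
      conv_lhs => rw [← Multiset.cons_erase ha]
      simp
    linarith
  have hcard : (C.erase a + {v}).card = C.card := by
    simp [Multiset.card_erase_of_mem ha]
    omega
  rw [centroid, centroid, hcard]
  rw [Multiset.sum_add, hsum]
  simp
  ring

lemma nth_min (C : Multiset ℝ) (hC : C ≠ 0) :
    nthSmallest C 0 ∈ C ∧ ∀ x ∈ C, nthSmallest C 0 ≤ x := by
  set l := C.sort (· ≤ ·) with hl
  have hlen : l.length = C.card := Multiset.length_sort _
  have hne : l ≠ [] := by
    intro h; apply hC; rw [← Multiset.sort_eq C (· ≤ ·), ← hl, h]; rfl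
  have hlp : 0 < l.length := List.length_pos_iff.2 hne
  have hs : l.Pairwise (· ≤ ·) := Multiset.pairwise_sort _ _
  have h0 : nthSmallest C 0 = l.get ⟨0, hlp⟩ := by
    rw [nthSmallest, ← hl, List.getD_eq_getElem _ _ hlp]; rfl
  constructor
  · rw [h0, ← Multiset.mem_sort (· ≤ ·), ← hl]; exact List.get_mem l _
  · intro x hx
    rw [← Multiset.mem_sort (· ≤ ·) , ← hl] at hx
    obtain ⟨j, hj⟩ := List.get_of_mem hx
    rw [h0, ← hj]
    exact List.Pairwise.rel_get_of_le hs (by exact Fin.mk_le_mk.2 (Nat.zero_le _))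

lemma nth_max (C : Multiset ℝ) (hC : C ≠ 0) :
    nthSmallest C (C.card - 1) ∈ C ∧ ∀ x ∈ C, x ≤ nthSmallest C (C.card - 1) := by
  set l := C.sort (· ≤ ·) with hl
  have hlen : l.length = C.card := Multiset.length_sort _
  have hne : l ≠ [] := by
    intro h; apply hC; rw [← Multiset.sort_eq C (· ≤ ·), ← hl, h]; rfl
  have hlp : 0 < l.length := List.length_pos_iff.2 hne
  have hs : l.Pairwise (· ≤ ·) := Multiset.pairwise_sort _ _
  have hlt : C.card - 1 < l.length := by omega
  have h0 : nthSmallest C (C.card - 1) = l.get ⟨C.card - 1, hlt⟩ := by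
    rw [nthSmallest, ← hl, List.getD_eq_getElem _ _ hlt]; rfl
  constructor
  · rw [h0, ← Multiset.mem_sort (· ≤ ·), ← hl]; exact List.get_mem l _
  · intro x hx
    rw [← Multiset.mem_sort (· ≤ ·), ← hl] at hx
    obtain ⟨j, hj⟩ := List.get_of_mem hx
    rw [h0, ← hj]
    exact List.Pairwise.rel_get_of_le hs (Fin.mk_le_mk.2 (by omega))

/-- Local sensitivity of the mean centroid of a cluster `C` with values in the
domain `[mA, MA]`: the set of centroid changes over all single-record
replacements within the domain has greatest element
`max (MA − min C, max C − mA) / |C|`. -/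
theorem centroid_local_sensitivity (mA MA : ℝ) (hdom : mA ≤ MA)
    (C : Multiset ℝ) (hC : C ≠ 0) (hmem : ∀ x ∈ C, x ∈ Set.Icc mA MA) :
    IsGreatest
      { d : ℝ | ∃ a ∈ C, ∃ v ∈ Set.Icc mA MA,
          d = |centroid (C.erase a + {v}) - centroid C| }
      (max (MA - nthSmallest C 0) (nthSmallest C (C.card - 1) - mA) / (C.card : ℝ)) := by
  obtain ⟨hm_mem, hm_min⟩ := nth_min C hC
  obtain ⟨hM_mem, hM_max⟩ := nth_max C hC
  set m := nthSmallest C 0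
  set Mx := nthSmallest C (C.card - 1)
  have hn : (0:ℝ) < C.card := by
    exact_mod_cast Multiset.card_pos.2 hC
  have hmIcc := hmem m hm_mem
  have hMIcc := hmem Mx hM_mem
  constructor
  · rcases le_total (Mx - mA) (MA - m) with h | h
    · refine ⟨m, hm_mem, MA, ⟨hdom, le_refl _⟩, ?_⟩
      rw [centroid_replace C m hm_mem MA, max_eq_left h, abs_div,
        abs_of_nonneg (by linarith [hmIcc.2] : (0:ℝ) ≤ MA - m), abs_of_pos hn]
    · refine ⟨Mx, hM_mem, mA, ⟨le_refl _, hdom⟩, ?_⟩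
      rw [centroid_replace C Mx hM_mem mA, max_eq_right h, abs_div,
        abs_of_nonpos (by linarith [hMIcc.1] : mA - Mx ≤ 0), abs_of_pos hn]
      ring_nf
  · rintro d ⟨a, ha, v, hv, rfl⟩
    rw [centroid_replace C a ha v, abs_div, abs_of_pos hn]
    have h1 : v - a ≤ MA - m := by
      have := hm_min a ha; have := hv.2; linarith
    have h2 : a - v ≤ Mx - mA := by
      have := hM_max a ha; have := hv.1; linarith
    have habs : |v - a| ≤ max (MA - m) (Mx - mA) := by
      rw [abs_le]
      constructor
      · have := le_max_right (MA - m) (Mx - mA); linarith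
      · exact h1.trans (le_max_left _ _)
    gcongr
end

section
/- Let C be a multiset of real numbers with |C| = n ≥ 3 and sorted elements l₀ ≤ l₁ ≤ … ≤ l_{n−1}. If C' = (C − {l₀}) + {v} is obtained by replacing one occurrence of the smallest element by a value v ≥ l_{n−1}, then preSum(C') − preSum(C) = (l_{n−1} − l₁) + (l₂ − l₁) + (l_{n−1} − l_{n−2}); in particular this difference does not depend on v. -/
/-- The preprocessed sum of a multiset `M` with sorted elements
`l₀ ≤ l₁ ≤ … ≤ l_{n−1}`: the sum after replacing one occurrence of the smallest
value by the second smallest and one occurrence of the largest value by the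
second largest, i.e. `(Σ M) − l₀ − l_{n−1} + l₁ + l_{n−2}`. -/
noncomputable def preSum (M : Multiset ℝ) : ℝ :=
  M.sum - nthSmallest M 0 - nthSmallest M (M.card - 1)
    + nthSmallest M 1 + nthSmallest M (M.card - 2)

/-- The preprocessed centroid of a multiset `M`. -/
noncomputable def preMean (M : Multiset ℝ) : ℝ := preSum M / M.card

/-- Replacing one occurrence of the smallest element of `C` by a value
`v ≥ l_{n−1}` changes the preprocessed sum by
`(l_{n−1} − l₁) + (l₂ − l₁) + (l_{n−1} − l_{n−2})`, independently of `v`. -/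
theorem preSum_replace_smallest (C : Multiset ℝ) (n : ℕ) (hn : 3 ≤ n)
    (hcard : C.card = n) (v : ℝ) (hv : nthSmallest C (n - 1) ≤ v) :
    preSum (C.erase (nthSmallest C 0) + {v}) - preSum C =
      (nthSmallest C (n - 1) - nthSmallest C 1)
        + (nthSmallest C 2 - nthSmallest C 1)
        + (nthSmallest C (n - 1) - nthSmallest C (n - 2)) := by
  set L := C.sort (· ≤ ·) with hLdef
  have hL : (L : Multiset ℝ) = C := Multiset.sort_eq C _
  have hlen : L.length = n := by rw [hLdef, Multiset.length_sort, hcard]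
  have hs : L.Pairwise (· ≤ ·) := Multiset.pairwise_sort C _
  obtain ⟨a, T, hLT⟩ : ∃ a T, L = a :: T :=
    List.exists_cons_of_ne_nil (by intro h; rw [h] at hlen; simp at hlen; omega)
  have hTlen : T.length = n - 1 := by
    rw [hLT] at hlen; simp at hlen; omega
  -- monotone access
  have hmono : ∀ i j : ℕ, i ≤ j → (hj : j < L.length) → L.getD i 0 ≤ L.getD j 0 := by
    intro i j hij hj
    have hi : i < L.length := lt_of_le_of_lt hij hj
    rw [List.getD_eq_getElem _ _ hi, List.getD_eq_getElem _ _ hj]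
    exact hs.rel_get_of_le (a := ⟨i, hi⟩) (b := ⟨j, hj⟩) hij
  -- every element of T is ≤ v
  have hvT : ∀ x ∈ T, x ≤ v := by
    intro x hx
    obtain ⟨i, hi, hxi⟩ := List.getElem_of_mem hx
    have hi' : i + 1 < L.length := by rw [hLT]; simpa using Nat.succ_lt_succ hi
    have h1 : L.getD (i+1) 0 = x := by
      rw [hLT, List.getD_cons_succ, List.getD_eq_getElem _ _ hi, hxi]
    have h2 : L.getD (i+1) 0 ≤ L.getD (n-1) 0 := hmono _ _ (by omega) (by omega)
    calc x ≤ L.getD (n-1) 0 := h1 ▸ h2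
      _ ≤ v := hv
  have ha0 : nthSmallest C 0 = a := by
    show L.getD 0 0 = a
    rw [hLT]; rfl
  have hCcons : C = a ::ₘ (T : Multiset ℝ) := by rw [← hL, hLT]; rfl
  have herase : C.erase (nthSmallest C 0) = (T : Multiset ℝ) := by
    rw [ha0, hCcons, Multiset.erase_cons_head]
  have hC' : C.erase (nthSmallest C 0) + {v} = ((T ++ [v] : List ℝ) : Multiset ℝ) := by
    rw [herase, ← Multiset.coe_singleton v, ← Multiset.coe_add]
  -- sort of the new multiset
  have hsortT : T.Pairwise (· ≤ ·) := by rw [hLT] at hs; exact hs.of_cons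
  have hsorted' : (T ++ [v]).Pairwise (· ≤ ·) := by
    rw [List.pairwise_append]
    exact ⟨hsortT, List.pairwise_singleton _ v, fun x hx y hy => by
      simp at hy; subst hy; exact hvT x hx⟩
  have hsort' : (C.erase (nthSmallest C 0) + {v}).sort (· ≤ ·) = T ++ [v] := by
    apply List.Perm.eq_of_pairwise' (Multiset.pairwise_sort _ _) hsorted'
    rw [← Multiset.coe_eq_coe, Multiset.sort_eq, hC']
  have hcard' : (C.erase (nthSmallest C 0) + {v}).card = n := by
    rw [hC']
    simp [hTlen]; omega
  -- values in the new multiset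
  have hn' : ∀ i, nthSmallest (C.erase (nthSmallest C 0) + {v}) i = (T ++ [v]).getD i 0 := by
    intro i; show _ = _; rw [nthSmallest, hsort']
  have hTget : ∀ i, (hi : i < T.length) → (T ++ [v]).getD i 0 = L.getD (i+1) 0 := by
    intro i hi
    rw [List.getD_append _ _ _ _ hi, hLT]
    rw [List.getD_eq_getElem _ _ hi, List.getD_eq_getElem _ _ (by simpa using Nat.succ_lt_succ hi)]
    simp
  have e0 : nthSmallest (C.erase (nthSmallest C 0) + {v}) 0 = nthSmallest C 1 := by
    rw [hn', hTget 0 (by omega)]; rfl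
  have e1 : nthSmallest (C.erase (nthSmallest C 0) + {v}) 1 = nthSmallest C 2 := by
    rw [hn', hTget 1 (by omega)]; rfl
  have e2 : nthSmallest (C.erase (nthSmallest C 0) + {v}) (n-2) = nthSmallest C (n-1) := by
    rw [hn', hTget (n-2) (by omega)]
    show _ = L.getD (n-1) 0
    congr 1; omega
  have e3 : nthSmallest (C.erase (nthSmallest C 0) + {v}) (n-1) = v := by
    rw [hn', List.getD_append_right _ _ _ _ (by omega), hTlen]
    have : n - 1 - (n - 1) = 0 := by omega
    rw [this]; rfl
  have hsum : (C.erase (nthSmallest C 0) + {v}).sum = C.sum - a + v := by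
    rw [Multiset.sum_add, herase]
    have : C.sum = a + (T : Multiset ℝ).sum := by rw [hCcons, Multiset.sum_cons]
    rw [this]; simp
  rw [preSum, preSum, hcard', hcard, hsum, e0, e1, e2, e3, ha0]
  ring
end

section
/- Let C be a multiset of real numbers with |C| = n ≥ 3 and sorted elements l₀ ≤ l₁ ≤ … ≤ l_{n−1}. If C' = (C − {l_{n−1}}) + {v} is obtained by replacing one occurrence of the largest element by a value v ≤ l₀, then preSum(C) − preSum(C') = (l_{n−2} − l₀) + (l_{n−2} − l_{n−3}) + (l₁ − l₀); in particular this difference does not depend on v. -/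
/-- Replacing one occurrence of the largest element of `C` by a value
`v ≤ l₀` changes the preprocessed sum by
`(l_{n−2} − l₀) + (l_{n−2} − l_{n−3}) + (l₁ − l₀)`, independently of `v`. -/
theorem preSum_replace_largest (C : Multiset ℝ) (n : ℕ) (hn : 3 ≤ n)
    (hcard : C.card = n) (v : ℝ) (hv : v ≤ nthSmallest C 0) :
    preSum C - preSum (C.erase (nthSmallest C (n - 1)) + {v}) =
      (nthSmallest C (n - 2) - nthSmallest C 0)
        + (nthSmallest C (n - 2) - nthSmallest C (n - 3))
        + (nthSmallest C 1 - nthSmallest C 0) := by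
  classical
  set L : List ℝ := C.sort (· ≤ ·) with hLdef
  have hLC : (L : Multiset ℝ) = C := Multiset.sort_eq _ _
  have hlen : L.length = n := by
    rw [← hcard, ← hLC]; simp
  have hne : L ≠ [] := by
    intro h; rw [h] at hlen; simp at hlen; omega
  have hsorted : L.Pairwise (· ≤ ·) := Multiset.pairwise_sort _ _
  -- m is the largest element
  set m : ℝ := nthSmallest C (n - 1) with hm
  have hmL : m = L.getLast hne := by
    rw [hm, nthSmallest, ← hLdef, List.getD_eq_getElem L 0 (by omega),
      List.getLast_eq_getElem]
    congr 1; omega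
  -- T = dropLast L
  set T : List ℝ := L.dropLast with hT
  have hTlen : T.length = n - 1 := by rw [hT, List.length_dropLast, hlen]
  have hLT : T ++ [m] = L := by rw [hmL]; exact List.dropLast_append_getLast hne
  have hCsplit : C = m ::ₘ (T : Multiset ℝ) := by
    rw [← hLC, ← hLT]
    simp [Multiset.cons_swap]
  have hTgetD : ∀ i : ℕ, i < n - 1 → T.getD i 0 = L.getD i 0 := by
    intro i hi
    rw [List.getD_eq_getElem T 0 (by omega), List.getD_eq_getElem L 0 (by omega)]
    exact List.getElem_dropLast (by rw [List.length_dropLast, hlen]; omega)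
  -- the modified multiset
  have herase : C.erase m = (T : Multiset ℝ) := by
    rw [hCsplit, Multiset.erase_cons_head]
  have hC' : C.erase m + {v} = ((v :: T : List ℝ) : Multiset ℝ) := by
    rw [herase, add_comm, Multiset.singleton_add, Multiset.cons_coe]
  -- v ≤ everything in L
  have hv0 : ∀ b ∈ L, v ≤ b := by
    obtain ⟨a, t, hat⟩ := List.exists_cons_of_ne_nil hne
    have ha : ∀ b ∈ t, a ≤ b := (List.pairwise_cons.mp (hat ▸ hsorted)).1
    have hva : v ≤ a := by
      rw [nthSmallest, ← hLdef, hat] at hv; simpa using hv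
    intro b hb
    rw [hat] at hb
    rcases List.mem_cons.mp hb with rfl | hb
    · exact hva
    · exact hva.trans (ha b hb)
  have hsortedC' : (v :: T).Pairwise (· ≤ ·) := by
    rw [List.pairwise_cons]
    exact ⟨fun b hb => hv0 b ((List.dropLast_sublist L).mem hb),
      hsorted.sublist (List.dropLast_sublist L)⟩
  have hsortC' : (C.erase m + {v}).sort (· ≤ ·) = v :: T := by
    refine List.Perm.eq_of_pairwise' (Multiset.pairwise_sort _ _) hsortedC' ?_
    exact Multiset.coe_eq_coe.mp (by rw [Multiset.sort_eq, hC'])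
  have hcard' : (C.erase m + {v}).card = n := by
    rw [hC']; simp [hTlen]; omega
  -- values of nthSmallest on C'
  have h0' : nthSmallest (C.erase m + {v}) 0 = v := by
    rw [nthSmallest, hsortC']; simp
  have h1' : nthSmallest (C.erase m + {v}) 1 = L.getD 0 0 := by
    rw [nthSmallest, hsortC', List.getD_cons_succ, hTgetD 0 (by omega)]
  have hn1' : nthSmallest (C.erase m + {v}) (n - 1) = L.getD (n - 2) 0 := by
    rw [nthSmallest, hsortC']
    have : n - 1 = (n - 2) + 1 := by omega
    rw [this, List.getD_cons_succ, hTgetD (n - 2) (by omega)]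
  have hn2' : nthSmallest (C.erase m + {v}) (n - 2) = L.getD (n - 3) 0 := by
    rw [nthSmallest, hsortC']
    have : n - 2 = (n - 3) + 1 := by omega
    rw [this, List.getD_cons_succ, hTgetD (n - 3) (by omega)]
  have hsum' : (C.erase m + {v}).sum = C.sum - m + v := by
    rw [Multiset.sum_add, herase]
    have := congrArg Multiset.sum hCsplit
    rw [Multiset.sum_cons] at this
    rw [Multiset.sum_singleton]
    linarith
  -- unfold everything
  unfold preSum
  rw [hcard', hcard, h0', h1', hn1', hn2', hsum']
  show _ - (_ - _ - _ + _ + _) = _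
  have e1 : nthSmallest C 0 = L.getD 0 0 := rfl
  have e2 : nthSmallest C 1 = L.getD 1 0 := rfl
  have e3 : nthSmallest C (n-1) = m := rfl
  have e4 : nthSmallest C (n-2) = L.getD (n-2) 0 := rfl
  have e5 : nthSmallest C (n-3) = L.getD (n-3) 0 := rfl
  rw [e1, e2, e3, e4, e5]
  ring
end

section
/- Let C be a multiset of real numbers with |C| = n ≥ 3, and let C' = (C − {a}) + {v} be any single-record replacement of C (a ∈ C, v ∈ ℝ). Let P(C') be the preprocessed multiset obtained from C' by replacing one occurrence of its smallest element by its second smallest element and one occurrence of its largest element by its second largest element. Then every element of P(C') lies in the interval [min C, max C]; that is, the modification of a single record keeps all preprocessed cluster values within the range of the original cluster. -/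
lemma nth_eq_get {M : Multiset ℝ} {i : ℕ} (h : i < Multiset.card M) :
    nthSmallest M i = (M.sort (· ≤ ·)).get ⟨i, by rw [Multiset.length_sort]; exact h⟩ := by
  rw [nthSmallest, List.getD_eq_getElem]
  · simp
  · rw [Multiset.length_sort]; exact h

lemma nth_mem {M : Multiset ℝ} {i : ℕ} (h : i < Multiset.card M) : nthSmallest M i ∈ M := by
  rw [nth_eq_get h, ← Multiset.mem_sort (· ≤ ·)]
  exact List.get_mem _ _

lemma nth_mono {M : Multiset ℝ} {i j : ℕ} (hij : i ≤ j) (hj : j < Multiset.card M) :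
    nthSmallest M i ≤ nthSmallest M j := by
  rw [nth_eq_get (lt_of_le_of_lt hij hj), nth_eq_get hj]
  exact (Multiset.pairwise_sort _ _).rel_get_of_le hij

example : True := trivial

lemma nth_zero_le {M : Multiset ℝ} {x : ℝ} (hx : x ∈ M) : nthSmallest M 0 ≤ x := by
  rw [← Multiset.mem_sort (· ≤ ·)] at hx
  obtain ⟨k, hk⟩ := List.mem_iff_get.mp hx
  have hk' : (k : ℕ) < Multiset.card M := by
    have h1 := k.isLt
    have h2 : (M.sort (· ≤ ·)).length = Multiset.card M := Multiset.length_sort _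
    omega
  calc nthSmallest M 0 ≤ nthSmallest M k := nth_mono (Nat.zero_le _) hk'
    _ = x := by rw [nth_eq_get hk']; rw [← hk]

lemma le_nth_last {M : Multiset ℝ} {x : ℝ} (hx : x ∈ M) :
    x ≤ nthSmallest M (Multiset.card M - 1) := by
  rw [← Multiset.mem_sort (· ≤ ·)] at hx
  obtain ⟨k, hk⟩ := List.mem_iff_get.mp hx
  have hk' : (k : ℕ) < Multiset.card M := by
    have h1 := k.isLt
    have h2 : (M.sort (· ≤ ·)).length = Multiset.card M := Multiset.length_sort _
    omega
  calc x = nthSmallest M k := by rw [nth_eq_get hk']; rw [← hk]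
    _ ≤ nthSmallest M (Multiset.card M - 1) := nth_mono (by omega) (by omega)

lemma count_two {M : Multiset ℝ} {i j : ℕ} (hij : i < j) (hj : j < Multiset.card M)
    (heq : nthSmallest M i = nthSmallest M j) : 2 ≤ M.count (nthSmallest M i) := by
  set l := M.sort (· ≤ ·) with hl
  have hlen : l.length = Multiset.card M := Multiset.length_sort _
  have hcount : M.count (nthSmallest M i) = l.count (nthSmallest M i) := by
    rw [← Multiset.coe_count]
    congr 1
    exact (Multiset.sort_eq _ _).symm
  rw [hcount]
  have hsplit : l = l.take (i+1) ++ l.drop (i+1) := (List.take_append_drop _ _).symm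
  rw [hsplit, List.count_append]
  have h1 : nthSmallest M i ∈ l.take (i+1) := by
    rw [nth_eq_get (by omega)]
    have hi : i < (l.take (i+1)).length := by
      rw [List.length_take]; omega
    have : (l.take (i+1)).get ⟨i, hi⟩ = l.get ⟨i, by omega⟩ := by
      simp [List.getElem_take]
    rw [← this]
    exact List.get_mem _ _
  have h2 : nthSmallest M i ∈ l.drop (i+1) := by
    rw [heq, nth_eq_get hj]
    have hjd : j - (i+1) < (l.drop (i+1)).length := by
      rw [List.length_drop]; omega
    have : (l.drop (i+1)).get ⟨j - (i+1), hjd⟩ = l.get ⟨j, by omega⟩ := by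
      simp only [List.get_eq_getElem, List.getElem_drop]
      congr 1
      omega
    rw [← this]
    exact List.get_mem _ _
  have c1 := List.count_pos_iff.mpr h1
  have c2 := List.count_pos_iff.mpr h2
  omega

/-- The preprocessed multiset `P(M)`: replace one occurrence of the smallest
value of `M` by the second smallest and one occurrence of the largest value by
the second largest. -/
noncomputable def preprocess (M : Multiset ℝ) : Multiset ℝ :=
  ((M.erase (nthSmallest M 0)).erase (nthSmallest M (M.card - 1)))
    + {nthSmallest M 1, nthSmallest M (M.card - 2)}

/-- Modifying a single record of `C` keeps all values of the preprocessed
cluster within the range `[min C, max C]` of the original cluster. -/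
theorem preprocess_mem_range (C : Multiset ℝ) (n : ℕ) (hn : 3 ≤ n)
    (hcard : C.card = n) (a : ℝ) (ha : a ∈ C) (v : ℝ) :
    ∀ x ∈ preprocess (C.erase a + {v}),
      nthSmallest C 0 ≤ x ∧ x ≤ nthSmallest C (n - 1) := by
  intro x hx
  set M : Multiset ℝ := C.erase a + {v} with hM
  have hMcard : Multiset.card M = n := by
    rw [hM, Multiset.card_add, Multiset.card_erase_of_mem ha, hcard]
    simp; omega
  -- bounds for elements of C
  have hC : ∀ y ∈ C, nthSmallest C 0 ≤ y ∧ y ≤ nthSmallest C (n - 1) := by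
    intro y hy
    refine ⟨nth_zero_le hy, ?_⟩
    have := le_nth_last hy
    rwa [hcard] at this
  have hMC : ∀ y, y ∈ M → y ∈ C ∨ y = v := by
    intro y hy
    rw [hM, Multiset.mem_add] at hy
    rcases hy with hy | hy
    · exact Or.inl (Multiset.mem_of_mem_erase hy)
    · right; simpa using hy
  -- count of v in M when v ∉ C
  have hcv : v ∉ C → M.count v = 1 := by
    intro hvC
    rw [hM, Multiset.count_add]
    have : (C.erase a).count v = 0 := by
      rw [Multiset.count_eq_zero]
      exact fun h => hvC (Multiset.mem_of_mem_erase h)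
    rw [this]; simp
  -- generic bound for middle indices
  have hbound : ∀ i : ℕ, 1 ≤ i → i ≤ n - 2 →
      nthSmallest C 0 ≤ nthSmallest M i ∧ nthSmallest M i ≤ nthSmallest C (n - 1) := by
    intro i h1 h2
    have hiM : i < Multiset.card M := by omega
    have htM : nthSmallest M i ∈ M := nth_mem hiM
    rcases hMC _ htM with htC | htv
    · exact hC _ htC
    · by_cases hvC : v ∈ C
      · exact hC _ (htv ▸ hvC)
      · have hcnt := hcv hvC
        constructor
        · -- lower bound
          have h0 : nthSmallest M 0 ≠ v := by
            intro h0
            have := count_two (M := M) (i := 0) (j := i) (by omega) hiM (by rw [h0, htv])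
            rw [h0, hcnt] at this; omega
          have h0M : nthSmallest M 0 ∈ M := nth_mem (by omega)
          rcases hMC _ h0M with h0C | h0v
          · exact le_trans (hC _ h0C).1 (nth_mono (Nat.zero_le _) hiM)
          · exact absurd h0v h0
        · -- upper bound
          have h0 : nthSmallest M (n - 1) ≠ v := by
            intro h0
            have := count_two (M := M) (i := i) (j := n - 1) (by omega) (by omega)
              (by rw [h0, htv])
            rw [htv, hcnt] at this; omega
          have h0M : nthSmallest M (n - 1) ∈ M := nth_mem (by omega)
          rcases hMC _ h0M with h0C | h0v
          · exact le_trans (nth_mono (by omega) (by omega)) (hC _ h0C).2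
          · exact absurd h0v h0
  rw [preprocess, Multiset.mem_add] at hx
  rcases hx with hx | hx
  · -- x in the doubly-erased part
    have hxM : x ∈ M := Multiset.mem_of_mem_erase (Multiset.mem_of_mem_erase hx)
    rcases hMC _ hxM with hxC | hxv
    · exact hC _ hxC
    · subst hxv
      by_cases hvC : x ∈ C
      · exact hC _ hvC
      · have hcnt := hcv hvC
        -- x = v survives both erasures, so neither erased value is v
        have hpos : 1 ≤ ((M.erase (nthSmallest M 0)).erase
            (nthSmallest M (Multiset.card M - 1))).count x :=
          Multiset.one_le_count_iff_mem.mpr hx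
        have hle : ((M.erase (nthSmallest M 0)).erase
            (nthSmallest M (Multiset.card M - 1))).count x
            ≤ (M.erase (nthSmallest M 0)).count x :=
          Multiset.count_le_of_le x (Multiset.erase_le _ _)
        have h0 : nthSmallest M 0 ≠ x := by
          intro h0
          rw [h0] at hpos
          rw [h0, Multiset.count_erase_self, hcnt] at hle
          omega
        have htop : nthSmallest M (Multiset.card M - 1) ≠ x := by
          intro h0
          rw [h0, Multiset.count_erase_self] at hpos
          have : (M.erase (nthSmallest M 0)).count x ≤ M.count x :=
            Multiset.count_le_of_le x (Multiset.erase_le _ _)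
          omega
        constructor
        · have h0M : nthSmallest M 0 ∈ M := nth_mem (by omega)
          rcases hMC _ h0M with h0C | h0v
          · exact le_trans (hC _ h0C).1 (nth_zero_le hxM)
          · exact absurd h0v h0
        · have h0M : nthSmallest M (Multiset.card M - 1) ∈ M := nth_mem (by omega)
          rcases hMC _ h0M with h0C | h0v
          · exact le_trans (le_nth_last hxM) (hC _ h0C).2
          · exact absurd h0v htop
  · -- x is one of the two inserted values
    rw [Multiset.insert_eq_cons, Multiset.mem_cons, Multiset.mem_singleton] at hx
    rcases hx with hx | hx
    · rw [hx]; exact hbound 1 le_rfl (by omega)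
    · rw [hx, hMcard]; exact hbound (n - 2) (by omega) (by omega)
end
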